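/- Let G = [[G₁₁, G₁₂],[G₁₂ᵀ, G₂₂]] be a symmetric block matrix with G₁₁ symmetric n_x×n_x and G₂₂ symmetric negative definite n_y×n_y. Let A be an m×n_x matrix and B an m×n_y matrix, and for an index set α ⊆ {1,…,m} such that B_α (the rows of B indexed by α) has full row rank, define Γ_α = G₁₁ − [G₁₂ A_αᵀ]·[[G₂₂, B_αᵀ],[B_α, 0]]⁻¹·[G₁₂ᵀ; A_α] (the block matrix [[G₂₂, B_αᵀ],[B_α, 0]] is invertible since G₂₂ is negative definite and B_α has full row rank). If ᾱ ⊆ α and Γ_α is positive definite, then Γ_ᾱ − Γ_α is positive semi-definite; in particular Γ_ᾱ ⪰ Γ_α ≻ 0. -/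

import Mathlib

open Matrix

/-- The Schur-complement-type matrix `Γ_s` associated with an index set `s` of
constraints: `Γ_s = G₁₁ − [G₁₂ A_sᵀ]·[[G₂₂, B_sᵀ],[B_s, 0]]⁻¹·[G₁₂ᵀ; A_s]`. -/
noncomputable def GammaSet {nx ny m : ℕ}
    (G11 : Matrix (Fin nx) (Fin nx) ℝ) (G12 : Matrix (Fin nx) (Fin ny) ℝ)
    (G22 : Matrix (Fin ny) (Fin ny) ℝ)
    (A : Matrix (Fin m) (Fin nx) ℝ) (B : Matrix (Fin m) (Fin ny) ℝ)
    (s : Finset (Fin m)) : Matrix (Fin nx) (Fin nx) ℝ :=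
  let As : Matrix {i // i ∈ s} (Fin nx) ℝ := Matrix.of fun i j => A i.val j
  let Bs : Matrix {i // i ∈ s} (Fin ny) ℝ := Matrix.of fun i j => B i.val j
  G11 - Matrix.fromCols G12 Asᵀ * (Matrix.fromBlocks G22 Bsᵀ Bs 0)⁻¹ *
    Matrix.fromRows G12ᵀ As

section Aux

variable {nx ny m : ℕ}
    (G11 : Matrix (Fin nx) (Fin nx) ℝ) (G12 : Matrix (Fin nx) (Fin ny) ℝ)
    (G22 : Matrix (Fin ny) (Fin ny) ℝ)
    (A : Matrix (Fin m) (Fin nx) ℝ) (B : Matrix (Fin m) (Fin ny) ℝ)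
    (s : Finset (Fin m))

/-- `Bᵀ *ᵥ x ≠ 0` for `x ≠ 0` when the rows of `B` are linearly independent. -/
lemma aux_mulVec_ne_zero (Bs : Matrix {i // i ∈ s} (Fin ny) ℝ)
    (hBs : LinearIndependent ℝ (fun i : {i // i ∈ s} => Bs i))
    (x : {i // i ∈ s} → ℝ) (hx : x ≠ 0) : Bsᵀ *ᵥ x ≠ 0 := by
  intro h
  apply hx
  refine funext (Fintype.linearIndependent_iff.mp hBs x ?_)
  funext j
  have := congrFun h j
  simpa [Matrix.mulVec, dotProduct, Finset.sum_apply, mul_comm] using this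

lemma M_isUnit (hG22nd : (-G22).PosDef)
    (Bs : Matrix {i // i ∈ s} (Fin ny) ℝ)
    (hBs : LinearIndependent ℝ (fun i : {i // i ∈ s} => Bs i)) :
    IsUnit (Matrix.fromBlocks G22 Bsᵀ Bs (0 : Matrix {i // i ∈ s} {i // i ∈ s} ℝ)) := by
  haveI : Invertible (-G22) := (-G22).invertibleOfIsUnitDet
    (isUnit_iff_ne_zero.mpr hG22nd.det_pos.ne')
  haveI hG22inv : Invertible G22 := (invertibleNeg (-G22)).copy G22 (neg_neg G22).symm
  have hinv_neg : (-G22)⁻¹ = -(G22⁻¹) := by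
    apply Matrix.inv_eq_right_inv
    rw [neg_mul_neg, Matrix.mul_nonsing_inv _ (isUnit_det_of_invertible G22)]
  have hSpd : (Bs * (-G22)⁻¹ * Bsᵀ).PosDef := by
    have hPinv : ((-G22)⁻¹).PosDef := hG22nd.inv
    rw [Matrix.posDef_iff_dotProduct_mulVec]
    constructor
    · have h := hPinv.1
      calc (Bs * (-G22)⁻¹ * Bsᵀ)ᴴ = Bsᵀᴴ * ((-G22)⁻¹)ᴴ * Bsᴴ := by
            rw [Matrix.conjTranspose_mul, Matrix.conjTranspose_mul, Matrix.mul_assoc]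
        _ = Bs * (-G22)⁻¹ * Bsᵀ := by
            rw [h]
            simp [Matrix.conjTranspose_eq_transpose_of_trivial]
    · intro x hx
      have hBx : Bsᵀ *ᵥ x ≠ 0 := aux_mulVec_ne_zero (s := s) Bs hBs x hx
      have hrw : star x ⬝ᵥ (Bs * (-G22)⁻¹ * Bsᵀ) *ᵥ x
          = star (Bsᵀ *ᵥ x) ⬝ᵥ (-G22)⁻¹ *ᵥ (Bsᵀ *ᵥ x) := by
        simp only [star_trivial]
        rw [← Matrix.mulVec_mulVec, ← Matrix.mulVec_mulVec, Matrix.dotProduct_mulVec,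
          ← Matrix.mulVec_transpose]
      rw [hrw]
      exact hPinv.dotProduct_mulVec_pos hBx
  haveI : Invertible (Bs * (-G22)⁻¹ * Bsᵀ) :=
    (Bs * (-G22)⁻¹ * Bsᵀ).invertibleOfIsUnitDet
      (isUnit_iff_ne_zero.mpr hSpd.det_pos.ne')
  haveI : Invertible ((0 : Matrix {i // i ∈ s} {i // i ∈ s} ℝ) - Bs * ⅟G22 * Bsᵀ) := by
    have he : (0 : Matrix {i // i ∈ s} {i // i ∈ s} ℝ) - Bs * ⅟G22 * Bsᵀ
        = Bs * (-G22)⁻¹ * Bsᵀ := by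
      rw [invOf_eq_nonsing_inv, hinv_neg, zero_sub, Matrix.mul_neg, Matrix.neg_mul]
    rw [he]; infer_instance
  haveI := Matrix.fromBlocks₁₁Invertible G22 Bsᵀ Bs (0 : Matrix {i // i ∈ s} {i // i ∈ s} ℝ)
  exact isUnit_of_invertible _

/-- The quadratic form of `Γ_s` as the value of a constrained stationary point. -/
lemma gamma_quadform (hG22nd : (-G22).PosDef)
    (hBs : LinearIndependent ℝ (fun i : {i // i ∈ s} => B i.val))
    (x : Fin nx → ℝ) :
    ∃ (y : Fin ny → ℝ) (l : {i // i ∈ s} → ℝ),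
      G22 *ᵥ y + (Matrix.of fun (i : {i // i ∈ s}) j => B i.val j)ᵀ *ᵥ l
          = -(G12ᵀ *ᵥ x) ∧
      (Matrix.of fun (i : {i // i ∈ s}) j => B i.val j) *ᵥ y
          = -((Matrix.of fun (i : {i // i ∈ s}) j => A i.val j) *ᵥ x) ∧
      x ⬝ᵥ GammaSet G11 G12 G22 A B s *ᵥ x
          = x ⬝ᵥ G11 *ᵥ x + 2 * (x ⬝ᵥ G12 *ᵥ y) + y ⬝ᵥ G22 *ᵥ y := by
  set As : Matrix {i // i ∈ s} (Fin nx) ℝ := Matrix.of fun i j => A i.val j with hAs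
  set Bs : Matrix {i // i ∈ s} (Fin ny) ℝ := Matrix.of fun i j => B i.val j with hBsdef
  set M := Matrix.fromBlocks G22 Bsᵀ Bs (0 : Matrix {i // i ∈ s} {i // i ∈ s} ℝ) with hMdef
  have hM : IsUnit M := M_isUnit G22 s hG22nd Bs hBs
  have hMdet : IsUnit M.det := (Matrix.isUnit_iff_isUnit_det M).mp hM
  set w : Fin ny ⊕ {i // i ∈ s} → ℝ := Sum.elim (G12ᵀ *ᵥ x) (As *ᵥ x) with hw
  set v : Fin ny ⊕ {i // i ∈ s} → ℝ := -(M⁻¹ *ᵥ w) with hv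
  set y : Fin ny → ℝ := v ∘ Sum.inl with hy
  set l : {i // i ∈ s} → ℝ := v ∘ Sum.inr with hl
  have hvelim : v = Sum.elim y l := by funext i; cases i <;> rfl
  have hMv : M *ᵥ v = -w := by
    rw [hv, Matrix.mulVec_neg, Matrix.mulVec_mulVec, Matrix.mul_nonsing_inv _ hMdet,
      Matrix.one_mulVec]
  rw [hvelim, hMdef, Matrix.fromBlocks_mulVec] at hMv
  have h1 : G22 *ᵥ y + Bsᵀ *ᵥ l = -(G12ᵀ *ᵥ x) := by
    funext j; exact congrFun hMv (Sum.inl j)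
  have h2 : Bs *ᵥ y = -(As *ᵥ x) := by
    funext i
    have := congrFun hMv (Sum.inr i)
    simpa [Matrix.zero_mulVec, hw] using this
  refine ⟨y, l, h1, h2, ?_⟩
  -- compute the quadratic form
  have hform : x ⬝ᵥ GammaSet G11 G12 G22 A B s *ᵥ x
      = x ⬝ᵥ G11 *ᵥ x + (x ⬝ᵥ G12 *ᵥ y + x ⬝ᵥ Asᵀ *ᵥ l) := by
    have hΓ : GammaSet G11 G12 G22 A B s
        = G11 - Matrix.fromCols G12 Asᵀ * M⁻¹ * Matrix.fromRows G12ᵀ As := rfl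
    rw [hΓ, Matrix.sub_mulVec, dotProduct_sub]
    have hNT : Matrix.fromRows G12ᵀ As *ᵥ x = w := by
      rw [Matrix.fromRows_mulVec, hw]
    have hsplit : (Matrix.fromCols G12 Asᵀ * M⁻¹ * Matrix.fromRows G12ᵀ As) *ᵥ x
        = Matrix.fromCols G12 Asᵀ *ᵥ (M⁻¹ *ᵥ w) := by
      rw [← hNT, ← Matrix.mulVec_mulVec, ← Matrix.mulVec_mulVec]
    rw [hsplit]
    have hMinvw : M⁻¹ *ᵥ w = -v := by rw [hv, neg_neg]
    rw [hMinvw, Matrix.mulVec_neg, dotProduct_neg, hvelim,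
      Matrix.fromCols_mulVec_sumElim, dotProduct_add]
    ring
  rw [hform]
  -- use the stationarity equations to rewrite `x ⬝ᵥ Asᵀ *ᵥ l`
  have e1 : y ⬝ᵥ (G22 *ᵥ y) = -(x ⬝ᵥ G12 *ᵥ y) - y ⬝ᵥ (Bsᵀ *ᵥ l) := by
    have : y ⬝ᵥ (G22 *ᵥ y + Bsᵀ *ᵥ l) = y ⬝ᵥ (-(G12ᵀ *ᵥ x)) := by rw [h1]
    rw [dotProduct_add, dotProduct_neg] at this
    have hyx : y ⬝ᵥ (G12ᵀ *ᵥ x) = x ⬝ᵥ G12 *ᵥ y := by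
      rw [Matrix.dotProduct_mulVec, Matrix.vecMul_transpose, dotProduct_comm]
    linarith [this, hyx]
  have e2 : y ⬝ᵥ (Bsᵀ *ᵥ l) = -(x ⬝ᵥ Asᵀ *ᵥ l) := by
    rw [Matrix.dotProduct_mulVec, Matrix.vecMul_transpose, h2,
      Matrix.dotProduct_mulVec (v := x), Matrix.vecMul_transpose,
      neg_dotProduct]
  have e1' : y ⬝ᵥ (G22 *ᵥ y) = -(x ⬝ᵥ G12 *ᵥ y) + x ⬝ᵥ Asᵀ *ᵥ l := by
    rw [e1, e2]; ring
  linarith [e1']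

/-- `Γ_s` is Hermitian. -/
lemma gamma_isHermitian (hG11 : G11.IsSymm) (hG22 : G22.IsSymm) :
    (GammaSet G11 G12 G22 A B s).IsHermitian := by
  set As : Matrix {i // i ∈ s} (Fin nx) ℝ := Matrix.of fun i j => A i.val j with hAs
  set Bs : Matrix {i // i ∈ s} (Fin ny) ℝ := Matrix.of fun i j => B i.val j with hBsdef
  set M := Matrix.fromBlocks G22 Bsᵀ Bs (0 : Matrix {i // i ∈ s} {i // i ∈ s} ℝ) with hMdef
  have hMsymm : Mᵀ = M := by
    rw [hMdef, Matrix.fromBlocks_transpose, Matrix.transpose_transpose, hG22.eq,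
      Matrix.transpose_zero]
  have hΓ : GammaSet G11 G12 G22 A B s
      = G11 - Matrix.fromCols G12 Asᵀ * M⁻¹ * Matrix.fromRows G12ᵀ As := rfl
  have hRows : Matrix.fromRows G12ᵀ As = (Matrix.fromCols G12 Asᵀ)ᵀ := by
    rw [Matrix.transpose_fromCols, Matrix.transpose_transpose]
  rw [Matrix.IsHermitian, Matrix.conjTranspose_eq_transpose_of_trivial, hΓ, hRows]
  rw [Matrix.transpose_sub, hG11.eq, Matrix.transpose_mul, Matrix.transpose_mul,
    Matrix.transpose_transpose, Matrix.transpose_nonsing_inv, hMsymm, Matrix.mul_assoc]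

end Aux

/-- Monotonicity of `Γ`: dropping constraints can only increase `Γ` in the Loewner
order, so `Γ_ᾱ ⪰ Γ_α ≻ 0`. -/
theorem stmt_6 {nx ny m : ℕ}
    (G11 : Matrix (Fin nx) (Fin nx) ℝ) (G12 : Matrix (Fin nx) (Fin ny) ℝ)
    (G22 : Matrix (Fin ny) (Fin ny) ℝ)
    (hG11 : G11.IsSymm) (hG22 : G22.IsSymm) (hG22nd : (-G22).PosDef)
    (A : Matrix (Fin m) (Fin nx) ℝ) (B : Matrix (Fin m) (Fin ny) ℝ)
    (α ᾱ : Finset (Fin m)) (hsub : ᾱ ⊆ α)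
    (hBα : LinearIndependent ℝ (fun i : {i // i ∈ α} => B i.val))
    (hΓα : (GammaSet G11 G12 G22 A B α).PosDef) :
    (GammaSet G11 G12 G22 A B ᾱ - GammaSet G11 G12 G22 A B α).PosSemidef ∧
    (GammaSet G11 G12 G22 A B ᾱ).PosDef := by
  -- the rows of `B` indexed by `ᾱ` are also linearly independent
  have hBᾱ : LinearIndependent ℝ (fun i : {i // i ∈ ᾱ} => B i.val) := by
    have : (fun i : {i // i ∈ ᾱ} => B i.val)
        = (fun i : {i // i ∈ α} => B i.val) ∘ (fun i => ⟨i.val, hsub i.2⟩) := rfl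
    rw [this]
    exact hBα.comp _ (fun a b hab =>
      Subtype.ext (Subtype.mk_eq_mk.mp hab))
  -- the key pointwise inequality
  have key : ∀ x : Fin nx → ℝ,
      0 ≤ x ⬝ᵥ (GammaSet G11 G12 G22 A B ᾱ - GammaSet G11 G12 G22 A B α) *ᵥ x := by
    intro x
    obtain ⟨y1, l1, h11, h12, h13⟩ := gamma_quadform G11 G12 G22 A B ᾱ hG22nd hBᾱ x
    obtain ⟨y2, l2, h21, h22, h23⟩ := gamma_quadform G11 G12 G22 A B α hG22nd hBα x
    set d : Fin ny → ℝ := y2 - y1 with hd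
    -- B_ᾱ *ᵥ d = 0
    have hBd : (Matrix.of fun (i : {i // i ∈ ᾱ}) j => B i.val j) *ᵥ d = 0 := by
      funext i
      have ha := congrFun h12 i
      have hb := congrFun h22 ⟨i.val, hsub i.2⟩
      simp only [Matrix.mulVec, dotProduct, Matrix.of_apply, Pi.neg_apply] at ha hb ⊢
      have : ∀ j, B i.val j * d j = B i.val j * y2 j - B i.val j * y1 j := by
        intro j; simp [hd, mul_sub]
      rw [Finset.sum_congr rfl fun j _ => this j, Finset.sum_sub_distrib, ha, hb]
      simp
    -- cross term vanishes
    have hcross : d ⬝ᵥ (G22 *ᵥ y1) = -(x ⬝ᵥ G12 *ᵥ d) := by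
      have h1 : d ⬝ᵥ (G22 *ᵥ y1 + (Matrix.of fun (i : {i // i ∈ ᾱ}) j => B i.val j)ᵀ *ᵥ l1)
          = d ⬝ᵥ (-(G12ᵀ *ᵥ x)) := by rw [h11]
      rw [dotProduct_add, dotProduct_neg] at h1
      have h2 : d ⬝ᵥ ((Matrix.of fun (i : {i // i ∈ ᾱ}) j => B i.val j)ᵀ *ᵥ l1) = 0 := by
        rw [Matrix.dotProduct_mulVec, Matrix.vecMul_transpose, hBd, zero_dotProduct]
      have h3 : d ⬝ᵥ (G12ᵀ *ᵥ x) = x ⬝ᵥ G12 *ᵥ d := by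
        rw [Matrix.dotProduct_mulVec, Matrix.vecMul_transpose, dotProduct_comm]
      linarith [h1, h2, h3]
    -- symmetry of G22 in the quadratic form
    have hsym : y1 ⬝ᵥ (G22 *ᵥ d) = d ⬝ᵥ (G22 *ᵥ y1) := by
      rw [Matrix.dotProduct_mulVec, ← Matrix.mulVec_transpose, hG22.eq, dotProduct_comm]
    -- expansion y2 = y1 + d
    have hy2 : y2 = y1 + d := by rw [hd]; ring
    have hexp : y2 ⬝ᵥ (G22 *ᵥ y2)
        = y1 ⬝ᵥ (G22 *ᵥ y1) + y1 ⬝ᵥ (G22 *ᵥ d) + d ⬝ᵥ (G22 *ᵥ y1) + d ⬝ᵥ (G22 *ᵥ d) := by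
      rw [hy2, Matrix.mulVec_add, dotProduct_add, add_dotProduct,
        add_dotProduct]
      ring
    have hxexp : x ⬝ᵥ G12 *ᵥ y2 = x ⬝ᵥ G12 *ᵥ y1 + x ⬝ᵥ G12 *ᵥ d := by
      rw [hy2, Matrix.mulVec_add, dotProduct_add]
    -- nonnegativity of -d G22 d
    have hpos : 0 ≤ -(d ⬝ᵥ (G22 *ᵥ d)) := by
      have := hG22nd.posSemidef.dotProduct_mulVec_nonneg d
      simpa [Matrix.neg_mulVec, dotProduct_neg, star_trivial] using this
    rw [Matrix.sub_mulVec, dotProduct_sub, h13, h23]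
    linarith [hexp, hxexp, hcross, hsym, hpos]
  have hherm : (GammaSet G11 G12 G22 A B ᾱ - GammaSet G11 G12 G22 A B α).IsHermitian :=
    (gamma_isHermitian G11 G12 G22 A B ᾱ hG11 hG22).sub
      (gamma_isHermitian G11 G12 G22 A B α hG11 hG22)
  constructor
  · exact Matrix.PosSemidef.of_dotProduct_mulVec_nonneg hherm (fun x => by simpa [star_trivial] using key x)
  · refine Matrix.PosDef.of_dotProduct_mulVec_pos (gamma_isHermitian G11 G12 G22 A B ᾱ hG11 hG22) (fun x hx => ?_)
    have h1 := hΓα.dotProduct_mulVec_pos hx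
    have h2 := key x
    rw [Matrix.sub_mulVec, dotProduct_sub] at h2
    simp only [star_trivial] at h1 ⊢
    linarith [h1, h2]
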